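/- Let h: E → ℝ be convex differentiable on a real inner-product space E, with gradient L-smooth, and let x, x̃ ∈ E, and set g = ⟨∇h(x), x − x̃⟩ ≥ 0. For β ∈ [0,1] let x_β = x + β(x̃ − x). If β = min{1, g/(L‖x̃ − x‖²)}, then h(x_β) ≤ h(x) − (1/2)·g²/max{g, L‖x̃ − x‖²}. -/

import Mathlib

open scoped RealInnerProductSpace

theorem descent_aux {E : Type*} [NormedAddCommGroup E] [InnerProductSpace ℝ E] [CompleteSpace E]
    (h : E → ℝ) (G : E → E) (L : ℝ) (hL : 0 < L)
    (hgrad : ∀ y, HasGradientAt h (G y) y)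
    (hLip : ∀ y z, ‖G y - G z‖ ≤ L * ‖y - z‖)
    (x d : E) : h (x + d) ≤ h x + ⟪G x, d⟫ + L / 2 * ‖d‖ ^ 2 := by
  set φ : ℝ → ℝ := fun t => h (x + t • d) - t * ⟪G x, d⟫ - t ^ 2 * (L / 2 * ‖d‖ ^ 2) with hφ
  have hder : ∀ t : ℝ, HasDerivAt φ (⟪G (x + t • d), d⟫ - ⟪G x, d⟫ - t * (L * ‖d‖ ^ 2)) t := by
    intro t
    have h1 : HasDerivAt (fun t : ℝ => x + t • d) d t := by
      simpa using (hasDerivAt_id t).smul_const d |>.const_add x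
    have h2 : HasDerivAt (fun t : ℝ => h (x + t • d)) ⟪G (x + t • d), d⟫ t := by
      have := ((hgrad (x + t • d)).hasFDerivAt).comp_hasDerivAt t h1
      exact this
    have h3 : HasDerivAt (fun t : ℝ => t * ⟪G x, d⟫) ⟪G x, d⟫ t := by
      simpa using (hasDerivAt_id t).mul_const (⟪G x, d⟫)
    have h4 : HasDerivAt (fun t : ℝ => t ^ 2 * (L / 2 * ‖d‖ ^ 2)) (t * (L * ‖d‖ ^ 2)) t := by
      have := (hasDerivAt_pow 2 t).mul_const (L / 2 * ‖d‖ ^ 2)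
      refine this.congr_deriv ?_
      ring
    exact (h2.sub h3).sub h4
  have key : φ 1 ≤ φ 0 := by
    have hanti : AntitoneOn φ (Set.Icc 0 1) := by
      apply antitoneOn_of_deriv_nonpos (convex_Icc 0 1)
      · exact (Differentiable.continuous fun t => (hder t).differentiableAt).continuousOn
      · intro t _; exact (hder t).differentiableAt.differentiableWithinAt
      · intro t ht
        rw [interior_Icc] at ht
        rw [(hder t).deriv]
        have hb : ⟪G (x + t • d) - G x, d⟫ ≤ t * (L * ‖d‖ ^ 2) := by
          calc ⟪G (x + t • d) - G x, d⟫ ≤ ‖G (x + t • d) - G x‖ * ‖d‖ :=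
                real_inner_le_norm _ _
            _ ≤ (L * ‖x + t • d - x‖) * ‖d‖ :=
                mul_le_mul_of_nonneg_right (by simpa using hLip (x + t • d) x) (norm_nonneg d)
            _ = t * (L * ‖d‖ ^ 2) := by
                rw [add_sub_cancel_left, norm_smul, Real.norm_eq_abs, abs_of_pos ht.1]
                ring
        have := inner_sub_left (𝕜 := ℝ) (G (x + t • d)) (G x) d
        linarith [hb, this.symm]
    exact hanti (by norm_num) (by norm_num) (by norm_num)
  simp only [hφ, one_smul, zero_smul, add_zero] at key
  push_cast at key
  linarith [key]

/-- Abstract per-iteration decrease of the conditional-gradient (Frank–Wolfe) step. -/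
theorem stmt5 {E : Type*} [NormedAddCommGroup E] [InnerProductSpace ℝ E] [CompleteSpace E]
    (h : E → ℝ) (G : E → E) (L : ℝ) (hL : 0 < L)
    (hconv : ConvexOn ℝ Set.univ h)
    (hgrad : ∀ y, HasGradientAt h (G y) y)
    (hLip : ∀ y z, ‖G y - G z‖ ≤ L * ‖y - z‖)
    (x xt : E) (g : ℝ) (hg : g = ⟪G x, x - xt⟫) (hg0 : 0 ≤ g)
    (β : ℝ) (hβ : β = min 1 (g / (L * ‖xt - x‖ ^ 2))) :
    h (x + β • (xt - x)) ≤ h x - (1 / 2) * g ^ 2 / max g (L * ‖xt - x‖ ^ 2) := by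
  set d := xt - x with hd
  set s := L * ‖d‖ ^ 2 with hs
  have hgd : ⟪G x, d⟫ = -g := by
    rw [hg, hd]
    rw [show x - xt = -(xt - x) by abel, inner_neg_right, neg_neg]
  have hdesc : h (x + β • d) ≤ h x - β * g + β ^ 2 * s / 2 := by
    have := descent_aux h G L hL hgrad hLip x (β • d)
    rw [inner_smul_right, hgd, norm_smul] at this
    calc h (x + β • d) ≤ h x + β * (-g) + L / 2 * (‖β‖ * ‖d‖) ^ 2 := this
      _ = h x - β * g + β ^ 2 * s / 2 := by
          rw [Real.norm_eq_abs, mul_pow, sq_abs, hs]; ring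
  rcases eq_or_ne (‖d‖) 0 with hd0 | hd0
  · have hdz : d = 0 := norm_eq_zero.mp hd0
    have hgz : g = 0 := by
      have := hgd
      rw [hdz, inner_zero_right] at this
      linarith
    rw [hdz, hgz]
    simp
  · have hspos : 0 < s := mul_pos hL (pow_pos (norm_pos_iff.mpr (fun hc => hd0 (by rw [hc]; simp))) 2)
    rcases le_or_gt s g with hcase | hcase
    · have hβ1 : β = 1 := by
        rw [hβ, min_eq_left ((one_le_div hspos).mpr hcase)]
      have hmax : max g s = g := max_eq_left hcase
      have hgpos : 0 < g := lt_of_lt_of_le hspos hcase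
      rw [hβ1] at hdesc
      rw [hmax]
      have h2 : (1 / 2) * g ^ 2 / g = g / 2 := by field_simp
      rw [h2]
      rw [hβ1]
      nlinarith [hdesc]
    · have hβv : β = g / s := by
        rw [hβ, min_eq_right (le_of_lt ((div_lt_one hspos).mpr hcase))]
      have hmax : max g s = s := max_eq_right hcase.le
      rw [hβv] at hdesc
      rw [hmax, hβv]
      have h2 : h x - g / s * g + (g / s) ^ 2 * s / 2 = h x - 1 / 2 * g ^ 2 / s := by
        field_simp; ring
      linarith [hdesc, h2.symm.le]
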